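/- arXiv:1004.3439 — 2 statements merged into one kernel-verified Lean document; each statement's English description precedes it below -/
import Mathlib

section
/- Let f : M → M be continuous on a compact metric space, Λ a compact invariant subset, and let x, (x_n), and sequences a_n < b_n of natural numbers be such that d(f^j x_n, f^j x) < 2^{-n+1} δ for all a_n ≤ j ≤ b_n, where x_n is periodic with period p_n dividing b_n − a_n, and a_n / (b_n − a_n) → 0. Then for every continuous ξ : M → ℝ, the difference between (1/b_n) ∑_{j=0}^{b_n−1} ξ(f^j x) and the integral of ξ against the periodic measure Y_n supported on the orbit of x_n tends to 0 as n → ∞. -/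
open MeasureTheory Filter Topology
open scoped ENNReal NNReal

variable {M : Type*}

lemma sum_range_mul_periodic (g : ℕ → ℝ) (p : ℕ) (hg : ∀ j, g (j + p) = g j) (m : ℕ) :
    ∑ j ∈ Finset.range (m * p), g j = m * ∑ i ∈ Finset.range p, g i := by
  have hshift : ∀ k j, g (j + k * p) = g j := by
    intro k
    induction k with
    | zero => simp
    | succ k ihk => intro j; rw [Nat.succ_mul, ← Nat.add_assoc, hg, ihk]
  induction m with
  | zero => simp
  | succ m ih =>
    rw [Nat.succ_mul, Finset.sum_range_add, ih]
    have : ∀ j, g (m * p + j) = g j := fun j => by rw [Nat.add_comm, hshift]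
    rw [Finset.sum_congr rfl fun j _ => this j]
    push_cast; ring

lemma sum_range_periodic_shift (g : ℕ → ℝ) (p : ℕ) (hg : ∀ j, g (j + p) = g j) (a : ℕ) :
    ∑ i ∈ Finset.range p, g (a + i) = ∑ i ∈ Finset.range p, g i := by
  induction a with
  | zero => simp
  | succ a ih =>
    have h1 := Finset.sum_range_succ' (fun i => g (a + i)) p
    have h2 := Finset.sum_range_succ (fun i => g (a + i)) p
    have h3 : g (a + p) = g a := hg a
    have : ∑ i ∈ Finset.range p, g (a + 1 + i) = ∑ i ∈ Finset.range p, g (a + i) := by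
      have he : ∀ i, g (a + 1 + i) = g (a + (i + 1)) := fun i => by ring_nf
      rw [Finset.sum_congr rfl fun i _ => he i]
      simp only [h3] at h2
      rw [h2] at h1
      simpa using h1.symm
    rw [this, ih]

/-- The periodic measure `(1/k) ∑_{i=0}^{k-1} δ_{f^i x}` of a periodic point `x`
of period `k`. -/
noncomputable def perMeas [MeasurableSpace M]
    (f : M → M) (x : M) (k : ℕ) : Measure M :=
  ((k : ℝ≥0∞))⁻¹ • ∑ i ∈ Finset.range k, Measure.dirac (f^[i] x)

lemma perMeas_integral [MetricSpace M] [CompactSpace M] [MeasurableSpace M] [BorelSpace M]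
    (f : M → M) (ξ : M → ℝ) (hξ : Continuous ξ) (y : M) (k : ℕ) :
    ∫ z, ξ z ∂(perMeas f y k) = (k : ℝ)⁻¹ * ∑ i ∈ Finset.range k, ξ (f^[i] y) := by
  have hcs : HasCompactSupport ξ := HasCompactSupport.of_compactSpace ξ
  have hint : ∀ w : M, Integrable ξ (Measure.dirac w) :=
    fun w => hξ.integrable_of_hasCompactSupport hcs
  rw [perMeas, integral_smul_measure, integral_finset_sum_measure fun i _ => hint _]
  simp [integral_dirac, ENNReal.toReal_inv, smul_eq_mul]

set_option maxHeartbeats 1000000 in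
/-- if `x` shadows the periodic points `x_n` on `[a_n, b_n]` with error
`2^{-n+1} δ`, the period `p_n` of `x_n` divides `b_n - a_n`, and `a_n/(b_n - a_n) → 0`,
then for every continuous `ξ` the Birkhoff average `(1/b_n) ∑_{j<b_n} ξ(f^j x)`
approaches `∫ ξ dY_n`, where `Y_n` is the periodic measure of `x_n`. -/
theorem birkhoff_average_approx_periodic_measure
    [MetricSpace M] [CompactSpace M] [MeasurableSpace M] [BorelSpace M]
    (f : M → M) (hf : Continuous f) (Λ : Set M) (hΛc : IsCompact Λ) (hΛi : f '' Λ ⊆ Λ)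
    (δ : ℝ) (hδ : 0 < δ) (x : M) (hx : x ∈ Λ) (xs : ℕ → M) (hxs : ∀ n, xs n ∈ Λ)
    (a b p : ℕ → ℕ) (hab : ∀ n, a n < b n) (hp : ∀ n, 0 < p n)
    (hper : ∀ n, f^[p n] (xs n) = xs n) (hdvd : ∀ n, p n ∣ (b n - a n))
    (hshadow : ∀ n, ∀ j, a n ≤ j → j ≤ b n →
      dist (f^[j] (xs n)) (f^[j] x) < (2 : ℝ) ^ (1 - (n : ℤ)) * δ)
    (hratio : Tendsto (fun n => (a n : ℝ) / ((b n : ℝ) - (a n : ℝ))) atTop (nhds 0)) :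
    ∀ ξ : M → ℝ, Continuous ξ →
      Tendsto (fun n => (b n : ℝ)⁻¹ * ∑ j ∈ Finset.range (b n), ξ (f^[j] x)
        - ∫ z, ξ z ∂(perMeas f (xs n) (p n))) atTop (nhds 0) := by
  intro ξ hξ
  -- bound on ξ
  obtain ⟨C, hC0, hCb⟩ : ∃ C : ℝ, 0 ≤ C ∧ ∀ y, |ξ y| ≤ C := by
    obtain ⟨y0, -, hy0⟩ := isCompact_univ.exists_isMaxOn ⟨x, Set.mem_univ x⟩
      (hξ.abs.continuousOn : ContinuousOn (fun y => |ξ y|) Set.univ)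
    exact ⟨|ξ y0|, abs_nonneg _, fun y => hy0 (Set.mem_univ y)⟩
  -- uniform continuity
  have hUC : UniformContinuous ξ := CompactSpace.uniformContinuous_of_continuous hξ
  -- the shadowing error tends to 0
  have herr : Tendsto (fun n : ℕ => (2 : ℝ) ^ (1 - (n : ℤ)) * δ) atTop (𝓝 0) := by
    have h2 : Tendsto (fun n : ℕ => ((2 : ℝ)⁻¹) ^ n) atTop (𝓝 0) :=
      tendsto_pow_atTop_nhds_zero_of_lt_one (by norm_num) (by norm_num)
    have := h2.const_mul (2 * δ)
    rw [mul_zero] at this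
    refine this.congr fun n => ?_
    rw [zpow_sub₀ (two_ne_zero), zpow_one, zpow_natCast]
    field_simp
    rw [← mul_pow]; norm_num
  rw [NormedAddCommGroup.tendsto_nhds_zero]
  intro ε hε
  obtain ⟨η, hη, hηε⟩ := Metric.uniformContinuous_iff.mp hUC (ε / 4) (by positivity)
  have hE1 : ∀ᶠ n : ℕ in atTop, (2 : ℝ) ^ (1 - (n : ℤ)) * δ < η :=
    herr.eventually (eventually_lt_nhds hη)
  have hq : (0 : ℝ) < ε / (4 * (C + 1)) := by positivity
  have hE2 : ∀ᶠ n in atTop,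
      (a n : ℝ) / ((b n : ℝ) - (a n : ℝ)) < ε / (4 * (C + 1)) :=
    hratio.eventually (eventually_lt_nhds hq)
  filter_upwards [hE1, hE2] with n h1 h2
  -- notation
  set A := (a n : ℝ) with hA
  set B := (b n : ℝ) with hB
  have habR : A < B := by show ((a n : ℝ) < (b n : ℝ)); exact_mod_cast hab n
  have hB0 : (0 : ℝ) < B := lt_of_le_of_lt (by positivity) habR
  have hBA0 : (0 : ℝ) < B - A := by linarith
  have hA0 : (0 : ℝ) ≤ A := by rw [hA]; exact Nat.cast_nonneg _
  have hcast : ((b n - a n : ℕ) : ℝ) = B - A := by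
    rw [hA, hB]; exact Nat.cast_sub (hab n).le
  -- the integral equals the Birkhoff sum of x_n over [a n, b n)
  obtain ⟨m, hm⟩ := hdvd n
  have hm0 : 0 < m := by
    rcases Nat.eq_zero_or_pos m with h | h
    · exfalso; rw [h, Nat.mul_zero] at hm; have := hab n; omega
    · exact h
  have hgper : ∀ j, ξ (f^[j + p n] (xs n)) = ξ (f^[j] (xs n)) := fun j => by
    rw [Function.iterate_add_apply, hper]
  have hI : ∫ z, ξ z ∂(perMeas f (xs n) (p n))
      = (B - A)⁻¹ * ∑ j ∈ Finset.Ico (a n) (b n), ξ (f^[j] (xs n)) := by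
    rw [perMeas_integral f ξ hξ]
    rw [Finset.sum_Ico_eq_sum_range]
    have hba : b n - a n = m * p n := by rw [hm]; ring
    rw [hba]
    have hshift : ∀ j, ξ (f^[a n + (j + p n)] (xs n)) = ξ (f^[a n + j] (xs n)) := by
      intro j
      have : a n + (j + p n) = (a n + j) + p n := by ring
      rw [this, hgper]
    rw [sum_range_mul_periodic (fun j => ξ (f^[a n + j] (xs n))) (p n) hshift m]
    rw [sum_range_periodic_shift (fun j => ξ (f^[j] (xs n))) (p n) hgper (a n)]
    have hmp : ((m * p n : ℕ) : ℝ) = B - A := by rw [← hba, hcast]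
    have hp0 : (0 : ℝ) < (p n : ℝ) := by exact_mod_cast hp n
    have hmR : (0:ℝ) < (m:ℝ) := by exact_mod_cast hm0
    rw [← hmp]
    push_cast
    field_simp
  rw [hI]
  -- estimates
  set S1 := ∑ j ∈ Finset.range (a n), ξ (f^[j] x) with hS1
  set S2 := ∑ j ∈ Finset.Ico (a n) (b n), ξ (f^[j] x) with hS2
  set T := ∑ j ∈ Finset.Ico (a n) (b n), ξ (f^[j] (xs n)) with hT
  have hsplit : ∑ j ∈ Finset.range (b n), ξ (f^[j] x) = S1 + S2 := by
    rw [hS1, hS2, Finset.range_eq_Ico, Finset.range_eq_Ico]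
    exact (Finset.sum_Ico_consecutive _ (Nat.zero_le _) (hab n).le).symm
  have hcard : (Finset.Ico (a n) (b n)).card = b n - a n := Nat.card_Ico _ _
  have hS1b : |S1| ≤ A * C := by
    calc |S1| ≤ ∑ j ∈ Finset.range (a n), |ξ (f^[j] x)| := Finset.abs_sum_le_sum_abs _ _
    _ ≤ ∑ j ∈ Finset.range (a n), C := Finset.sum_le_sum fun j _ => hCb _
    _ = A * C := by rw [Finset.sum_const, Finset.card_range]; push_cast; ring
  have hS2b : |S2| ≤ (B - A) * C := by
    calc |S2| ≤ ∑ j ∈ Finset.Ico (a n) (b n), |ξ (f^[j] x)| := Finset.abs_sum_le_sum_abs _ _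
    _ ≤ ∑ j ∈ Finset.Ico (a n) (b n), C := Finset.sum_le_sum fun j _ => hCb _
    _ = (B - A) * C := by rw [Finset.sum_const, hcard, nsmul_eq_mul, hcast]
  have hS2T : |S2 - T| ≤ (B - A) * (ε / 4) := by
    rw [hS2, hT, ← Finset.sum_sub_distrib]
    calc |∑ j ∈ Finset.Ico (a n) (b n), (ξ (f^[j] x) - ξ (f^[j] (xs n)))|
        ≤ ∑ j ∈ Finset.Ico (a n) (b n), |ξ (f^[j] x) - ξ (f^[j] (xs n))| :=
          Finset.abs_sum_le_sum_abs _ _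
      _ ≤ ∑ j ∈ Finset.Ico (a n) (b n), (ε / 4) := by
          refine Finset.sum_le_sum fun j hj => ?_
          rw [Finset.mem_Ico] at hj
          have hd : dist (f^[j] (xs n)) (f^[j] x) < η :=
            lt_trans (hshadow n j hj.1 hj.2.le) h1
          have := hηε hd
          rw [Real.dist_eq] at this
          rw [abs_sub_comm]
          exact this.le
      _ = (B - A) * (ε / 4) := by rw [Finset.sum_const, hcard, nsmul_eq_mul, hcast]
  -- main computation
  rw [hsplit, Real.norm_eq_abs]
  have hkey : B⁻¹ * (S1 + S2) - (B - A)⁻¹ * T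
      = B⁻¹ * S1 - (A / (B * (B - A))) * S2 + (B - A)⁻¹ * (S2 - T) := by
    field_simp
    ring
  rw [hkey]
  have hq' : A / (B - A) < ε / (4 * (C + 1)) := h2
  have t1 : |B⁻¹ * S1| ≤ (A / (B - A)) * C := by
    rw [abs_mul, abs_of_pos (inv_pos.mpr hB0)]
    calc B⁻¹ * |S1| ≤ B⁻¹ * (A * C) := by
          exact mul_le_mul_of_nonneg_left hS1b (inv_nonneg.mpr hB0.le)
      _ ≤ (A / (B - A)) * C := by
          rw [inv_mul_eq_div, div_mul_eq_mul_div, div_le_div_iff₀ hB0 hBA0]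
          nlinarith [mul_nonneg (mul_nonneg hA0 hC0) hA0]
  have t2 : |(A / (B * (B - A))) * S2| ≤ (A / (B - A)) * C := by
    rw [abs_mul, abs_of_nonneg (div_nonneg hA0 (mul_pos hB0 hBA0).le)]
    calc A / (B * (B - A)) * |S2| ≤ A / (B * (B - A)) * ((B - A) * C) :=
          mul_le_mul_of_nonneg_left hS2b (div_nonneg hA0 (mul_pos hB0 hBA0).le)
      _ ≤ (A / (B - A)) * C := by
          rw [div_mul_eq_mul_div, div_mul_eq_mul_div, div_le_div_iff₀ (mul_pos hB0 hBA0) hBA0]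
          nlinarith [mul_nonneg (mul_nonneg (mul_nonneg hA0 hC0) hBA0.le) hA0]
  have t3 : |(B - A)⁻¹ * (S2 - T)| ≤ ε / 4 := by
    rw [abs_mul, abs_of_pos (inv_pos.mpr hBA0)]
    calc (B - A)⁻¹ * |S2 - T| ≤ (B - A)⁻¹ * ((B - A) * (ε / 4)) :=
          mul_le_mul_of_nonneg_left hS2T (inv_nonneg.mpr hBA0.le)
      _ = ε / 4 := by rw [← mul_assoc, inv_mul_cancel₀ hBA0.ne', one_mul]
  have hqC : (A / (B - A)) * C < ε / 4 := by
    have hAq : 0 ≤ A / (B - A) := div_nonneg hA0 hBA0.le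
    have h4 : (A / (B - A)) * (C + 1) < (ε / (4 * (C + 1))) * (C + 1) :=
      mul_lt_mul_of_pos_right hq' (by linarith)
    have h5 : (ε / (4 * (C + 1))) * (C + 1) = ε / 4 := by
      field_simp
    nlinarith [hAq]
  calc |B⁻¹ * S1 - (A / (B * (B - A))) * S2 + (B - A)⁻¹ * (S2 - T)|
      ≤ |B⁻¹ * S1 - (A / (B * (B - A))) * S2| + |(B - A)⁻¹ * (S2 - T)| := abs_add_le _ _
    _ ≤ (|B⁻¹ * S1| + |(A / (B * (B - A))) * S2|) + |(B - A)⁻¹ * (S2 - T)| :=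
        add_le_add_left (abs_sub _ _) _
    _ < ε := by linarith [t1, t2, t3, hqC]
end

section
/- Barycenter property is symmetric in time-averaged measures: if Λ is a compact f-invariant set with the barycenter property and p, q are periodic points in Λ with periodic measures μ_p, μ_q, then for every t ∈ [0,1] and every ε > 0 there exists a periodic point z ∈ Λ whose periodic measure μ_z satisfies |∫ξ dμ_z − (t ∫ξ dμ_p + (1−t) ∫ξ dμ_q)| < ε for any fixed finite family of continuous functions ξ with ‖ξ‖ ≤ 1 (given suitable choices of n_1, n_2 proportional to t and 1−t). -/
open Filter Topology

/-- The barycenter property (with the period of the connecting periodic orbit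
controlled up to an additive `O(N)` term, constant `C`): for periodic `p, q ∈ Λ` and
`ε > 0` there is `N` such that for all `n₁, n₂` there is a periodic `z ∈ Λ` of period
`k`, `n₁ + N + n₂ ≤ k ≤ n₁ + N + n₂ + C·N`, with `d(f^i z, f^i p) < ε` for
`-n₁ ≤ i ≤ 0` and `d(f^{i+N} z, f^i q) < ε` for `0 ≤ i ≤ n₂`. -/
def BarycenterProperty {M : Type*} [MetricSpace M] (f : Equiv.Perm M) (Λ : Set M)
    (C : ℕ) : Prop :=
  ∀ p q : M, p ∈ Λ → q ∈ Λ →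
    (∃ kp : ℕ, 0 < kp ∧ (⇑f)^[kp] p = p) → (∃ kq : ℕ, 0 < kq ∧ (⇑f)^[kq] q = q) →
    ∀ ε : ℝ, 0 < ε → ∃ N : ℕ, 0 < N ∧ ∀ n₁ n₂ : ℕ, ∃ z ∈ Λ, ∃ k : ℕ,
      n₁ + N + n₂ ≤ k ∧ k ≤ n₁ + N + n₂ + C * N ∧ (⇑f)^[k] z = z ∧
      (∀ i : ℕ, i ≤ n₁ → dist ((f ^ (-(i : ℤ))) z) ((f ^ (-(i : ℤ))) p) < ε) ∧
      (∀ i : ℕ, i ≤ n₂ → dist ((⇑f)^[i + N] z) ((⇑f)^[i] q) < ε)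


lemma aux_iterate_mul_fixed {M : Type*} (F : M → M) {x : M} {r : ℕ} (hx : F^[r] x = x)
    (c : ℕ) : F^[c * r] x = x := by
  rw [mul_comm, Function.iterate_mul]
  exact Function.iterate_fixed hx c

lemma aux_sum_iterate_mul {M : Type*} (F : M → M) (g : M → ℝ) {x : M} {r : ℕ}
    (hx : F^[r] x = x) (c : ℕ) :
    ∑ j ∈ Finset.range (c * r), g (F^[j] x) = c * ∑ j ∈ Finset.range r, g (F^[j] x) := by
  induction c with
  | zero => simp
  | succ c ih =>
      have h1 : (c + 1) * r = c * r + r := by ring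
      rw [h1, Finset.sum_range_add, ih]
      have h2 : ∀ j, g (F^[c * r + j] x) = g (F^[j] x) := by
        intro j
        rw [add_comm, Function.iterate_add_apply, aux_iterate_mul_fixed F hx c]
      simp only [h2]
      push_cast
      ring

lemma aux_sum_shift {M : Type*} (F : M → M) (g : M → ℝ) (k : ℕ) :
    ∀ (z : M), F^[k] z = z → ∀ s : ℕ,
      ∑ j ∈ Finset.range k, g (F^[j] (F^[s] z)) = ∑ j ∈ Finset.range k, g (F^[j] z) := by
  have step : ∀ (z : M), F^[k] z = z →
      ∑ j ∈ Finset.range k, g (F^[j] (F z)) = ∑ j ∈ Finset.range k, g (F^[j] z) := by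
    intro z hz
    cases k with
    | zero => simp
    | succ k' =>
        have h1 : ∀ j, g (F^[j] (F z)) = g (F^[j + 1] z) := by
          intro j; rw [← Function.iterate_succ_apply]
        simp only [h1]
        rw [Finset.sum_range_succ, Finset.sum_range_succ']
        simp only [Function.iterate_zero_apply]
        rw [hz]
  intro z hz s
  induction s generalizing z with
  | zero => simp
  | succ s ih =>
      have hz' : F^[k] (F z) = F z := by
        rw [← Function.iterate_succ_apply, Function.iterate_succ_apply', hz]
      rw [Function.iterate_succ_apply, ih (F z) hz', step z hz]

lemma aux_neg_zpow {M : Type*} (f : Equiv.Perm M) {z : M} {k : ℕ} (hz : (⇑f)^[k] z = z)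
    {i : ℕ} (hik : i ≤ k) : (f ^ (-(i : ℤ))) z = (⇑f)^[k - i] z := by
  have h1 : (⇑f)^[i] ((⇑f)^[k - i] z) = z := by
    rw [← Function.iterate_add_apply, Nat.add_sub_cancel' hik, hz]
  have h2 : (f ^ (-(i : ℤ))) = ((f ^ i)⁻¹ : Equiv.Perm M) := by
    rw [zpow_neg, zpow_natCast]
  rw [h2]
  have h3 : (⇑(f ^ i)) ((⇑f)^[k - i] z) = z := by
    rw [← Equiv.Perm.iterate_eq_pow]; exact h1
  exact (Equiv.symm_apply_eq (f ^ i)).mpr h3.symm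

lemma aux_unif {M : Type*} [MetricSpace M] [CompactSpace M] {ι : Type} [Fintype ι]
    (ξ : ι → M → ℝ) (hcont : ∀ i, Continuous (ξ i)) (e : ℝ) (he : 0 < e) :
    ∃ δ : ℝ, 0 < δ ∧ ∀ i x y, dist x y < δ → |ξ i x - ξ i y| < e := by
  classical
  have key : ∀ s : Finset ι, ∃ δ : ℝ, 0 < δ ∧
      ∀ i ∈ s, ∀ x y, dist x y < δ → |ξ i x - ξ i y| < e := by
    intro s
    induction s using Finset.induction with
    | empty => exact ⟨1, one_pos, by simp⟩
    | insert a s hnotmem ih =>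
        obtain ⟨δ, hδ, hδ'⟩ := ih
        have huc := CompactSpace.uniformContinuous_of_continuous (hcont a)
        obtain ⟨δa, hδa, hδa'⟩ := Metric.uniformContinuous_iff.mp huc e he
        refine ⟨min δ δa, lt_min hδ hδa, ?_⟩
        intro i hi x y hxy
        rcases Finset.mem_insert.mp hi with rfl | hi
        · rw [← Real.dist_eq]; exact hδa' (hxy.trans_le (min_le_right _ _))
        · exact hδ' i hi x y (hxy.trans_le (min_le_left _ _))
  obtain ⟨δ, hδ, hδ'⟩ := key Finset.univ
  exact ⟨δ, hδ, fun i => hδ' i (Finset.mem_univ i)⟩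

lemma aux_abs6 (x1 x2 x3 x4 x5 x6 : ℝ) :
    |x1 + x2 + x3 + x4 + x5 + x6| ≤ |x1| + |x2| + |x3| + |x4| + |x5| + |x6| := by
  calc |x1 + x2 + x3 + x4 + x5 + x6| ≤ |x1 + x2 + x3 + x4 + x5| + |x6| := abs_add_le _ _
    _ ≤ (|x1 + x2 + x3 + x4| + |x5|) + |x6| := by gcongr; exact abs_add_le _ _
    _ ≤ ((|x1 + x2 + x3| + |x4|) + |x5|) + |x6| := by gcongr; exact abs_add_le _ _
    _ ≤ (((|x1 + x2| + |x3|) + |x4|) + |x5|) + |x6| := by gcongr; exact abs_add_le _ _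
    _ ≤ ((((|x1| + |x2|) + |x3|) + |x4|) + |x5|) + |x6| := by gcongr; exact abs_add_le _ _

set_option maxHeartbeats 1000000 in
/-- under the barycenter property, time-averaged measures of periodic
orbits can be combined in any convex proportion `t : (1-t)`: for any finite family of
continuous test functions bounded by `1` and any `ε > 0` there is a periodic `z ∈ Λ`
whose orbit average is `ε`-close to `t ∫ξ dμ_p + (1-t) ∫ξ dμ_q` for each `ξ`. -/
theorem barycenter_convex_combination_of_periodic_measures
    {M : Type*} [MetricSpace M] [CompactSpace M]
    (f : Equiv.Perm M) (hf : Continuous ⇑f) (hf' : Continuous ⇑f.symm)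
    (Λ : Set M) (hΛc : IsCompact Λ) (hΛinv : ⇑f '' Λ = Λ)
    (C : ℕ) (hbary : BarycenterProperty f Λ C)
    (p q : M) (hp : p ∈ Λ) (hq : q ∈ Λ)
    (kp kq : ℕ) (hkp : 0 < kp) (hkq : 0 < kq)
    (hpper : (⇑f)^[kp] p = p) (hqper : (⇑f)^[kq] q = q) :
    ∀ t : ℝ, t ∈ Set.Icc (0 : ℝ) 1 → ∀ ε : ℝ, 0 < ε →
      ∀ (ι : Type) [Fintype ι], ∀ ξ : ι → M → ℝ,
        (∀ i, Continuous (ξ i)) → (∀ i, ∀ x, |ξ i x| ≤ 1) →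
        ∃ z ∈ Λ, ∃ k : ℕ, 0 < k ∧ (⇑f)^[k] z = z ∧
          ∀ i : ι,
            |(k : ℝ)⁻¹ * ∑ j ∈ Finset.range k, ξ i ((⇑f)^[j] z)
              - (t * ((kp : ℝ)⁻¹ * ∑ j ∈ Finset.range kp, ξ i ((⇑f)^[j] p))
                 + (1 - t) * ((kq : ℝ)⁻¹ * ∑ j ∈ Finset.range kq, ξ i ((⇑f)^[j] q)))|
            < ε := by
  intro t ht ε hε ι _ ξ hcont hbdd
  obtain ⟨ht0, ht1⟩ := ht
  obtain ⟨δ, hδ, hδ'⟩ := aux_unif ξ hcont (ε/4) (by linarith)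
  obtain ⟨N, hN, hNz⟩ := hbary p q hp hq ⟨kp, hkp, hpper⟩ ⟨kq, hkq, hqper⟩ δ hδ
  -- constants (kept opaque)
  obtain ⟨K, hKdef⟩ : ∃ K : ℕ, K = kp * kq := ⟨_, rfl⟩
  obtain ⟨KR, hKRdef⟩ : ∃ KR : ℝ, KR = (kp : ℝ) * (kq : ℝ) := ⟨_, rfl⟩
  have hKR0 : (0:ℝ) < KR := by rw [hKRdef]; positivity
  have hKR1 : (1:ℝ) ≤ KR := by
    rw [hKRdef]
    have h1 : (1:ℝ) ≤ (kp:ℝ) := by exact_mod_cast hkp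
    have h2 : (1:ℝ) ≤ (kq:ℝ) := by exact_mod_cast hkq
    have h3 := mul_le_mul h1 h2 zero_le_one (by linarith : (0:ℝ) ≤ (kp:ℝ))
    linarith
  obtain ⟨BB, hBBdef⟩ : ∃ BB : ℝ, BB = 2 * KR + 3 * ((C:ℝ)+1) * (N:ℝ) := ⟨_, rfl⟩
  have hBB0 : (0:ℝ) < BB := by
    rw [hBBdef]
    have : (0:ℝ) ≤ 3 * ((C:ℝ)+1) * (N:ℝ) := by positivity
    linarith
  obtain ⟨m, hmdef⟩ : ∃ m : ℕ, m = ⌈2 * BB / ε⌉₊ + 1 := ⟨_, rfl⟩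
  have hm0 : 0 < m := by omega
  have hm0R : (0:ℝ) < (m:ℝ) := by exact_mod_cast hm0
  have hmnn : (0:ℝ) ≤ (m:ℝ) := hm0R.le
  have hmB : 2 * BB / ε < (m:ℝ) := by
    have h1 := Nat.le_ceil (2 * BB / ε)
    rw [hmdef]
    push_cast
    linarith
  obtain ⟨a, hadef⟩ : ∃ a : ℕ, a = ⌊t * m⌋₊ := ⟨_, rfl⟩
  have htm0 : (0:ℝ) ≤ t * m := by positivity
  have hat : (a:ℝ) ≤ t * m := by rw [hadef]; exact Nat.floor_le htm0
  have hta : t * m < (a:ℝ) + 1 := by rw [hadef]; exact Nat.lt_floor_add_one _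
  have ham : a ≤ m := by
    rw [hadef]
    have h1 : t * (m:ℝ) ≤ ((m:ℕ):ℝ) := by
      have h2 := mul_nonneg (sub_nonneg.mpr ht1) hmnn
      nlinarith [h2]
    calc ⌊t * (m:ℝ)⌋₊ ≤ ⌊((m:ℕ):ℝ)⌋₊ := Nat.floor_le_floor h1
      _ = m := Nat.floor_natCast m
  obtain ⟨n₁, hn₁def⟩ : ∃ n₁ : ℕ, n₁ = a * K := ⟨_, rfl⟩
  obtain ⟨n₂, hn₂def⟩ : ∃ n₂ : ℕ, n₂ = (m - a) * K := ⟨_, rfl⟩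
  obtain ⟨z, hzΛ, k, hk1, hk2, hkz, hsh1, hsh2⟩ := hNz n₁ n₂
  have hk0 : 0 < k := by omega
  have hkR : (0:ℝ) < (k:ℝ) := by exact_mod_cast hk0
  have hkne : (k:ℝ) ≠ 0 := ne_of_gt hkR
  have hkpne : (kp:ℝ) ≠ 0 := by positivity
  have hkqne : (kq:ℝ) ≠ 0 := by positivity
  have hn₁k : n₁ ≤ k := by omega
  -- cast facts
  have hn₁R : ((n₁:ℕ):ℝ) = (a:ℝ) * KR := by rw [hn₁def, hKdef, hKRdef]; push_cast; ring
  have hn₂R : ((n₂:ℕ):ℝ) = ((m:ℝ) - (a:ℝ)) * KR := by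
    rw [hn₂def, hKdef, hKRdef, Nat.cast_mul, Nat.cast_sub ham, Nat.cast_mul]
  have hCN0 : (0:ℝ) ≤ ((C:ℝ)+1) * (N:ℝ) := by positivity
  have hkcast1 : ((n₁:ℝ) + (n₂:ℝ)) + (N:ℝ) ≤ (k:ℝ) := by
    have h1 : n₁ + n₂ + N ≤ k := by omega
    exact_mod_cast h1
  have hkcast2 : (k:ℝ) ≤ ((n₁:ℝ) + (n₂:ℝ)) + (N:ℝ) + (C:ℝ) * (N:ℝ) := by
    have h1 : k ≤ n₁ + n₂ + N + C * N := by
      calc k ≤ n₁ + N + n₂ + C * N := hk2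
        _ = n₁ + n₂ + N + C * N := by ring
    exact_mod_cast h1
  have hklow : (m:ℝ) * KR ≤ (k:ℝ) := by
    have h : ((n₁:ℝ) + (n₂:ℝ)) = (m:ℝ) * KR := by rw [hn₁R, hn₂R]; ring
    have hN0 : (0:ℝ) ≤ (N:ℝ) := by positivity
    linarith
  have hkup : (k:ℝ) ≤ (m:ℝ) * KR + ((C:ℝ)+1) * (N:ℝ) := by
    have h : ((n₁:ℝ) + (n₂:ℝ)) = (m:ℝ) * KR := by rw [hn₁R, hn₂R]; ring
    linarith [hkcast2]
  -- periodicity of p at n₁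
  have hn₁eq : n₁ = (a * kq) * kp := by rw [hn₁def, hKdef]; ring
  have hn₂eq : n₂ = ((m - a) * kp) * kq := by rw [hn₂def, hKdef]; ring
  have hpn₁ : (⇑f)^[n₁] p = p := by rw [hn₁eq]; exact aux_iterate_mul_fixed _ hpper _
  refine ⟨z, hzΛ, k, hk0, hkz, ?_⟩
  intro i
  -- the shifted sum splits into four pieces
  have hsum : ∑ j ∈ Finset.range k, ξ i ((⇑f)^[j] z)
      = (∑ j ∈ Finset.range n₁, ξ i ((⇑f)^[j] ((⇑f)^[k - n₁] z)))
        + (∑ j ∈ Finset.Ico n₁ (n₁+N), ξ i ((⇑f)^[j] ((⇑f)^[k - n₁] z)))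
        + (∑ j ∈ Finset.Ico (n₁+N) (n₁+N+n₂), ξ i ((⇑f)^[j] ((⇑f)^[k - n₁] z)))
        + (∑ j ∈ Finset.Ico (n₁+N+n₂) k, ξ i ((⇑f)^[j] ((⇑f)^[k - n₁] z))) := by
    rw [← aux_sum_shift (⇑f) (ξ i) k z hkz (k - n₁), Finset.range_eq_Ico,
      ← Finset.sum_Ico_consecutive _ (Nat.zero_le n₁) hn₁k,
      ← Finset.sum_Ico_consecutive _ (by omega : n₁ ≤ n₁ + N) (by omega : n₁ + N ≤ k),
      ← Finset.sum_Ico_consecutive _ (by omega : n₁ + N ≤ n₁ + N + n₂)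
        (by omega : n₁ + N + n₂ ≤ k)]
    simp only [Finset.range_eq_Ico]
    ring
  -- bound on the first piece
  have hterm1 : ∀ j ∈ Finset.range n₁,
      |ξ i ((⇑f)^[j] ((⇑f)^[k - n₁] z)) - ξ i ((⇑f)^[j] p)| ≤ ε/4 := by
    intro j hj
    have hj' : j < n₁ := Finset.mem_range.mp hj
    have e1 : (⇑f)^[j] ((⇑f)^[k - n₁] z) = (f ^ (-((n₁ - j : ℕ) : ℤ))) z := by
      rw [aux_neg_zpow f hkz (by omega : n₁ - j ≤ k), ← Function.iterate_add_apply]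
      congr 1
      omega
    have e2 : (⇑f)^[j] p = (f ^ (-((n₁ - j : ℕ) : ℤ))) p := by
      rw [aux_neg_zpow f hpn₁ (by omega : n₁ - j ≤ n₁)]
      congr 1
      omega
    rw [e1, e2]
    exact (hδ' i _ _ (hsh1 (n₁ - j) (by omega))).le
  have hSp' : ((a * kq : ℕ) : ℝ) * ∑ j ∈ Finset.range kp, ξ i ((⇑f)^[j] p)
      = ∑ j ∈ Finset.range n₁, ξ i ((⇑f)^[j] p) := by
    rw [hn₁eq]
    exact (aux_sum_iterate_mul (⇑f) (ξ i) hpper (a * kq)).symm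
  have hS1bd : |(∑ j ∈ Finset.range n₁, ξ i ((⇑f)^[j] ((⇑f)^[k - n₁] z)))
      - ((a * kq : ℕ) : ℝ) * ∑ j ∈ Finset.range kp, ξ i ((⇑f)^[j] p)|
      ≤ (n₁:ℝ) * (ε/4) := by
    rw [hSp', ← Finset.sum_sub_distrib]
    refine (Finset.abs_sum_le_sum_abs _ _).trans ?_
    have := Finset.sum_le_card_nsmul (Finset.range n₁) _ (ε/4) hterm1
    simpa [Finset.card_range, nsmul_eq_mul] using this
  -- bound on the third piece
  have hS3eq : ∑ j ∈ Finset.Ico (n₁+N) (n₁+N+n₂), ξ i ((⇑f)^[j] ((⇑f)^[k - n₁] z))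
      = ∑ j ∈ Finset.range n₂, ξ i ((⇑f)^[j + N] z) := by
    rw [Finset.sum_Ico_eq_sum_range, (by omega : n₁ + N + n₂ - (n₁ + N) = n₂)]
    refine Finset.sum_congr rfl fun j hj => ?_
    congr 1
    rw [← Function.iterate_add_apply,
      (by omega : n₁ + N + j + (k - n₁) = (j + N) + k),
      Function.iterate_add_apply, hkz]
  have hterm3 : ∀ j ∈ Finset.range n₂,
      |ξ i ((⇑f)^[j + N] z) - ξ i ((⇑f)^[j] q)| ≤ ε/4 := by
    intro j hj
    have hj' : j < n₂ := Finset.mem_range.mp hj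
    exact (hδ' i _ _ (hsh2 j (by omega))).le
  have hSq' : (((m - a) * kp : ℕ) : ℝ) * ∑ j ∈ Finset.range kq, ξ i ((⇑f)^[j] q)
      = ∑ j ∈ Finset.range n₂, ξ i ((⇑f)^[j] q) := by
    rw [hn₂eq]
    exact (aux_sum_iterate_mul (⇑f) (ξ i) hqper ((m - a) * kp)).symm
  have hS3bd : |(∑ j ∈ Finset.Ico (n₁+N) (n₁+N+n₂), ξ i ((⇑f)^[j] ((⇑f)^[k - n₁] z)))
      - (((m - a) * kp : ℕ) : ℝ) * ∑ j ∈ Finset.range kq, ξ i ((⇑f)^[j] q)|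
      ≤ (n₂:ℝ) * (ε/4) := by
    rw [hSq', hS3eq, ← Finset.sum_sub_distrib]
    refine (Finset.abs_sum_le_sum_abs _ _).trans ?_
    have := Finset.sum_le_card_nsmul (Finset.range n₂) _ (ε/4) hterm3
    simpa [Finset.card_range, nsmul_eq_mul] using this
  -- bounds on the second and fourth pieces
  have hS2bd : |∑ j ∈ Finset.Ico n₁ (n₁+N), ξ i ((⇑f)^[j] ((⇑f)^[k - n₁] z))| ≤ (N:ℝ) := by
    refine (Finset.abs_sum_le_sum_abs _ _).trans ?_
    have := Finset.sum_le_card_nsmul (Finset.Ico n₁ (n₁+N)) _ 1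
      (fun x _ => hbdd i ((⇑f)^[x] ((⇑f)^[k - n₁] z)))
    simpa [Nat.card_Ico, nsmul_eq_mul] using this
  have hS4bd : |∑ j ∈ Finset.Ico (n₁+N+n₂) k, ξ i ((⇑f)^[j] ((⇑f)^[k - n₁] z))|
      ≤ (C:ℝ) * (N:ℝ) := by
    refine (Finset.abs_sum_le_sum_abs _ _).trans ?_
    have h1 := Finset.sum_le_card_nsmul (Finset.Ico (n₁+N+n₂) k) _ 1
      (fun x _ => hbdd i ((⇑f)^[x] ((⇑f)^[k - n₁] z)))
    have h2 : ((Finset.Ico (n₁+N+n₂) k).card : ℝ) ≤ (C:ℝ) * (N:ℝ) := by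
      rw [Nat.card_Ico]
      have h3 : k - (n₁ + N + n₂) ≤ C * N :=
        Nat.sub_le_iff_le_add.mpr (hk2.trans_eq (by ring))
      exact_mod_cast h3
    calc ∑ x ∈ Finset.Ico (n₁+N+n₂) k, |ξ i ((⇑f)^[x] ((⇑f)^[k - n₁] z))|
        ≤ ((Finset.Ico (n₁+N+n₂) k).card : ℝ) * 1 := by
          simpa [nsmul_eq_mul] using h1
      _ ≤ (C:ℝ) * (N:ℝ) := by rw [mul_one]; exact h2
  -- averages are bounded by 1
  have hApbd : |(kp:ℝ)⁻¹ * ∑ j ∈ Finset.range kp, ξ i ((⇑f)^[j] p)| ≤ 1 := by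
    rw [abs_mul, abs_inv, Nat.abs_cast]
    have hS : |∑ j ∈ Finset.range kp, ξ i ((⇑f)^[j] p)| ≤ (kp:ℝ) := by
      refine (Finset.abs_sum_le_sum_abs _ _).trans ?_
      have := Finset.sum_le_card_nsmul (Finset.range kp) _ 1 (fun x _ => hbdd i ((⇑f)^[x] p))
      simpa [Finset.card_range, nsmul_eq_mul] using this
    calc (kp:ℝ)⁻¹ * |∑ j ∈ Finset.range kp, ξ i ((⇑f)^[j] p)| ≤ (kp:ℝ)⁻¹ * (kp:ℝ) := by
          gcongr
      _ = 1 := inv_mul_cancel₀ hkpne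
  have hAqbd : |(kq:ℝ)⁻¹ * ∑ j ∈ Finset.range kq, ξ i ((⇑f)^[j] q)| ≤ 1 := by
    rw [abs_mul, abs_inv, Nat.abs_cast]
    have hS : |∑ j ∈ Finset.range kq, ξ i ((⇑f)^[j] q)| ≤ (kq:ℝ) := by
      refine (Finset.abs_sum_le_sum_abs _ _).trans ?_
      have := Finset.sum_le_card_nsmul (Finset.range kq) _ 1 (fun x _ => hbdd i ((⇑f)^[x] q))
      simpa [Finset.card_range, nsmul_eq_mul] using this
    calc (kq:ℝ)⁻¹ * |∑ j ∈ Finset.range kq, ξ i ((⇑f)^[j] q)| ≤ (kq:ℝ)⁻¹ * (kq:ℝ) := by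
          gcongr
      _ = 1 := inv_mul_cancel₀ hkqne
  -- fraction bounds
  have hAineq : ((n₁:ℕ):ℝ) ≤ t * k := by
    rw [hn₁R]
    linarith [mul_le_mul_of_nonneg_right hat hKR0.le,
      mul_nonneg ht0 (sub_nonneg.mpr hklow)]
  have hBineq : t * (k:ℝ) ≤ ((n₁:ℕ):ℝ) + KR + ((C:ℝ)+1) * (N:ℝ) := by
    rw [hn₁R]
    linarith [mul_le_mul_of_nonneg_left hkup ht0,
      mul_le_mul_of_nonneg_right hta.le hKR0.le,
      mul_le_of_le_one_left hCN0 ht1]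
  have hA2 : ((n₂:ℕ):ℝ) ≤ (1-t) * k + KR := by
    rw [hn₂R]
    linarith [mul_le_mul_of_nonneg_right hta.le hKR0.le,
      mul_le_mul_of_nonneg_left hklow (sub_nonneg.mpr ht1)]
  have hB2 : (1-t) * (k:ℝ) ≤ ((n₂:ℕ):ℝ) + ((C:ℝ)+1) * (N:ℝ) := by
    rw [hn₂R]
    linarith [mul_le_mul_of_nonneg_left hkup (sub_nonneg.mpr ht1),
      mul_le_mul_of_nonneg_right hat hKR0.le,
      mul_le_of_le_one_left hCN0 (by linarith : 1 - t ≤ 1)]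
  have hfr1 : |((n₁:ℕ):ℝ) * (k:ℝ)⁻¹ - t| ≤ (KR + ((C:ℝ)+1) * (N:ℝ)) * (k:ℝ)⁻¹ := by
    have e : ((n₁:ℕ):ℝ) * (k:ℝ)⁻¹ - t = (((n₁:ℕ):ℝ) - t * k) * (k:ℝ)⁻¹ := by
      field_simp
    rw [e, abs_mul, abs_inv, Nat.abs_cast]
    gcongr
    exact abs_le.mpr ⟨by linarith, by linarith [hKR0.le, hCN0]⟩
  have hfr2 : |((n₂:ℕ):ℝ) * (k:ℝ)⁻¹ - (1-t)| ≤ (KR + ((C:ℝ)+1) * (N:ℝ)) * (k:ℝ)⁻¹ := by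
    have e : ((n₂:ℕ):ℝ) * (k:ℝ)⁻¹ - (1-t) = (((n₂:ℕ):ℝ) - (1-t) * k) * (k:ℝ)⁻¹ := by
      field_simp
    rw [e, abs_mul, abs_inv, Nat.abs_cast]
    gcongr
    exact abs_le.mpr ⟨by linarith, by linarith [hKR0.le, hCN0]⟩
  -- the main identity
  have hApSp : ((n₁:ℕ):ℝ) * ((kp:ℝ)⁻¹ * ∑ j ∈ Finset.range kp, ξ i ((⇑f)^[j] p))
      = ((a * kq : ℕ):ℝ) * ∑ j ∈ Finset.range kp, ξ i ((⇑f)^[j] p) := by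
    have h : ((n₁:ℕ):ℝ) = ((a * kq : ℕ):ℝ) * (kp:ℝ) := by
      rw [hn₁eq]; push_cast; ring
    rw [h]
    field_simp
  have hAqSq : ((n₂:ℕ):ℝ) * ((kq:ℝ)⁻¹ * ∑ j ∈ Finset.range kq, ξ i ((⇑f)^[j] q))
      = (((m - a) * kp : ℕ):ℝ) * ∑ j ∈ Finset.range kq, ξ i ((⇑f)^[j] q) := by
    have h : ((n₂:ℕ):ℝ) = (((m - a) * kp : ℕ):ℝ) * (kq:ℝ) := by
      rw [hn₂eq]; push_cast; ring
    rw [h]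
    field_simp
  have hid : (k:ℝ)⁻¹ * (∑ j ∈ Finset.range k, ξ i ((⇑f)^[j] z))
      - (t * ((kp:ℝ)⁻¹ * ∑ j ∈ Finset.range kp, ξ i ((⇑f)^[j] p))
         + (1-t) * ((kq:ℝ)⁻¹ * ∑ j ∈ Finset.range kq, ξ i ((⇑f)^[j] q)))
      = (k:ℝ)⁻¹ * ((∑ j ∈ Finset.range n₁, ξ i ((⇑f)^[j] ((⇑f)^[k - n₁] z)))
            - ((a * kq : ℕ):ℝ) * ∑ j ∈ Finset.range kp, ξ i ((⇑f)^[j] p))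
        + (k:ℝ)⁻¹ * (∑ j ∈ Finset.Ico n₁ (n₁+N), ξ i ((⇑f)^[j] ((⇑f)^[k - n₁] z)))
        + (k:ℝ)⁻¹ * ((∑ j ∈ Finset.Ico (n₁+N) (n₁+N+n₂), ξ i ((⇑f)^[j] ((⇑f)^[k - n₁] z)))
            - (((m - a) * kp : ℕ):ℝ) * ∑ j ∈ Finset.range kq, ξ i ((⇑f)^[j] q))
        + (k:ℝ)⁻¹ * (∑ j ∈ Finset.Ico (n₁+N+n₂) k, ξ i ((⇑f)^[j] ((⇑f)^[k - n₁] z)))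
        + (((n₁:ℕ):ℝ) * (k:ℝ)⁻¹ - t)
            * ((kp:ℝ)⁻¹ * ∑ j ∈ Finset.range kp, ξ i ((⇑f)^[j] p))
        + (((n₂:ℕ):ℝ) * (k:ℝ)⁻¹ - (1-t))
            * ((kq:ℝ)⁻¹ * ∑ j ∈ Finset.range kq, ξ i ((⇑f)^[j] q)) := by
    linear_combination (k:ℝ)⁻¹ * hsum - (k:ℝ)⁻¹ * hApSp - (k:ℝ)⁻¹ * hAqSq
  -- the final estimate
  have hkinv0 : (0:ℝ) ≤ (k:ℝ)⁻¹ := by positivity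
  have htri : |(k:ℝ)⁻¹ * (∑ j ∈ Finset.range k, ξ i ((⇑f)^[j] z))
      - (t * ((kp:ℝ)⁻¹ * ∑ j ∈ Finset.range kp, ξ i ((⇑f)^[j] p))
         + (1-t) * ((kq:ℝ)⁻¹ * ∑ j ∈ Finset.range kq, ξ i ((⇑f)^[j] q)))|
      ≤ (k:ℝ)⁻¹ * ((n₁:ℝ) * (ε/4)) + (k:ℝ)⁻¹ * (N:ℝ)
        + (k:ℝ)⁻¹ * ((n₂:ℝ) * (ε/4)) + (k:ℝ)⁻¹ * ((C:ℝ) * (N:ℝ))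
        + (KR + ((C:ℝ)+1) * (N:ℝ)) * (k:ℝ)⁻¹ * 1
        + (KR + ((C:ℝ)+1) * (N:ℝ)) * (k:ℝ)⁻¹ * 1 := by
    rw [hid]
    refine (aux_abs6 _ _ _ _ _ _).trans ?_
    gcongr ?_ + ?_ + ?_ + ?_ + ?_ + ?_
    · rw [abs_mul, abs_inv, Nat.abs_cast]
      exact mul_le_mul_of_nonneg_left hS1bd hkinv0
    · rw [abs_mul, abs_inv, Nat.abs_cast]
      exact mul_le_mul_of_nonneg_left hS2bd hkinv0
    · rw [abs_mul, abs_inv, Nat.abs_cast]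
      exact mul_le_mul_of_nonneg_left hS3bd hkinv0
    · rw [abs_mul, abs_inv, Nat.abs_cast]
      exact mul_le_mul_of_nonneg_left hS4bd hkinv0
    · rw [abs_mul]
      exact mul_le_mul hfr1 hApbd (abs_nonneg _) (by positivity)
    · rw [abs_mul]
      exact mul_le_mul hfr2 hAqbd (abs_nonneg _) (by positivity)
  have hX : (k:ℝ)⁻¹ * (n₁:ℝ) + (k:ℝ)⁻¹ * (n₂:ℝ) ≤ 1 := by
    have hn12R : ((n₁:ℕ):ℝ) + ((n₂:ℕ):ℝ) ≤ (k:ℝ) := by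
      have hN0 : (0:ℝ) ≤ (N:ℝ) := by positivity
      linarith [hkcast1]
    have h := mul_le_mul_of_nonneg_left hn12R hkinv0
    have h2 : (k:ℝ)⁻¹ * (k:ℝ) = 1 := inv_mul_cancel₀ hkne
    have h3 : (k:ℝ)⁻¹ * (((n₁:ℕ):ℝ) + ((n₂:ℕ):ℝ))
        = (k:ℝ)⁻¹ * (n₁:ℝ) + (k:ℝ)⁻¹ * (n₂:ℝ) := by ring
    linarith
  have hquarter : (k:ℝ)⁻¹ * ((n₁:ℝ) * (ε/4)) + (k:ℝ)⁻¹ * ((n₂:ℝ) * (ε/4)) ≤ ε/4 := by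
    linarith [mul_nonneg hε.le (sub_nonneg.mpr hX)]
  have hmk : (m:ℝ) ≤ (k:ℝ) := by
    linarith [mul_le_mul_of_nonneg_left hKR1 hmnn]
  have hrest : (k:ℝ)⁻¹ * (N:ℝ) + (k:ℝ)⁻¹ * ((C:ℝ) * (N:ℝ))
      + (KR + ((C:ℝ)+1) * (N:ℝ)) * (k:ℝ)⁻¹ * 1
      + (KR + ((C:ℝ)+1) * (N:ℝ)) * (k:ℝ)⁻¹ * 1 < ε/2 := by
    have hBBk : (k:ℝ)⁻¹ * (N:ℝ) + (k:ℝ)⁻¹ * ((C:ℝ) * (N:ℝ))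
        + (KR + ((C:ℝ)+1) * (N:ℝ)) * (k:ℝ)⁻¹ * 1
        + (KR + ((C:ℝ)+1) * (N:ℝ)) * (k:ℝ)⁻¹ * 1 = BB * (k:ℝ)⁻¹ := by
      rw [hBBdef]; ring
    rw [hBBk]
    have h1 : BB * (k:ℝ)⁻¹ ≤ BB * (m:ℝ)⁻¹ := by
      have := inv_anti₀ hm0R hmk
      exact mul_le_mul_of_nonneg_left this hBB0.le
    have h2 : BB * (m:ℝ)⁻¹ < ε/2 := by
      rw [← div_eq_mul_inv, div_lt_iff₀ hm0R]
      have h3 : 2 * BB < (m:ℝ) * ε := by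
        have := (div_lt_iff₀ hε).mp hmB
        linarith
      linarith
    linarith
  calc |(k:ℝ)⁻¹ * (∑ j ∈ Finset.range k, ξ i ((⇑f)^[j] z))
      - (t * ((kp:ℝ)⁻¹ * ∑ j ∈ Finset.range kp, ξ i ((⇑f)^[j] p))
         + (1-t) * ((kq:ℝ)⁻¹ * ∑ j ∈ Finset.range kq, ξ i ((⇑f)^[j] q)))|
      ≤ _ := htri
    _ < ε/4 + ε/2 := by linarith
    _ < ε := by linarith
end
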